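/- The sum of the series ∑_{n=1}^∞ (1/2^n) ∑_{k=0}^n (-1)^{k+1} · binom(n,k) · ln(k+1) equals ln(π/2). -/

import Mathlib

open Filter Real Set MeasureTheory Finset

lemma aux_exp_int {s : ℝ} (hs : 0 < s) : ∫ t in Ioi (0:ℝ), Real.exp (-(s*t)) = 1/s := by
  have := integral_comp_mul_left_Ioi (fun x => Real.exp (-x)) 0 hs
  simp only [mul_zero] at this
  rw [show (fun t => Real.exp (-(s*t))) = (fun t => (fun x => Real.exp (-x)) (s*t)) from rfl, this,
    integral_exp_neg_Ioi_zero]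
  simp [abs_of_pos hs, one_div]

lemma aux_ptwise {t : ℝ} (ht : 0 < t) (c : ℝ) :
    ∫ s in (1:ℝ)..c, Real.exp (-(s*t)) = (Real.exp (-t) - Real.exp (-(c*t)))/t := by
  have h : ∀ s ∈ uIcc (1:ℝ) c, HasDerivAt (fun s => -(Real.exp (-(s*t))/t))
      (Real.exp (-(s*t))) s := by
    intro s _
    have h1 : HasDerivAt (fun s : ℝ => -(s*t)) (-t) s := by
      have h0 := ((hasDerivAt_id s).mul_const t).neg
      rw [one_mul] at h0
      exact h0
    have h3 : HasDerivAt (fun s => -(Real.exp (-(s*t))/t)) (-(Real.exp (-(s*t)) * -t / t)) s :=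
      (h1.exp.div_const t).neg
    convert h3 using 1
    rw [mul_neg, neg_div, neg_neg, mul_div_assoc, div_self ht.ne', mul_one]
  have hint : IntervalIntegrable (fun s => Real.exp (-(s*t))) volume 1 c :=
    Continuous.intervalIntegrable (by continuity) _ _
  rw [intervalIntegral.integral_eq_sub_of_hasDerivAt h hint]
  rw [one_mul]
  ring

lemma frullani {c : ℝ} (hc : 1 ≤ c) :
    ∫ t in Ioi (0:ℝ), (Real.exp (-t) - Real.exp (-(c*t)))/t = Real.log c := by
  have key : Integrable (Function.uncurry fun (t s : ℝ) => Real.exp (-(s * t)))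
      ((volume.restrict (Ioi (0:ℝ))).prod (volume.restrict (Ioc (1:ℝ) c))) := by
    have h1 : Integrable (fun t : ℝ => Real.exp (-t)) (volume.restrict (Ioi (0:ℝ))) := by
      exact (by simpa using exp_neg_integrableOn_Ioi 0 one_pos : IntegrableOn (fun t : ℝ => Real.exp (-t)) (Ioi 0))
    have h2 : Integrable (fun _ : ℝ => (1:ℝ)) (volume.restrict (Ioc (1:ℝ) c)) :=
      integrable_const 1
    have hbd := h1.mul_prod h2
    refine hbd.mono' ?_ ?_
    · refine Continuous.aestronglyMeasurable ?_
      exact Real.continuous_exp.comp (continuous_snd.mul continuous_fst).neg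
    · rw [Measure.prod_restrict]
      filter_upwards [ae_restrict_mem ((measurableSet_Ioi).prod measurableSet_Ioc)] with p hp
      obtain ⟨hp1, hp2⟩ := hp
      simp only [Function.uncurry, Real.norm_eq_abs, abs_exp, mul_one]
      exact Real.exp_le_exp.2 (by nlinarith [hp1.out, hp2.1])
  calc ∫ t in Ioi (0:ℝ), (Real.exp (-t) - Real.exp (-(c*t)))/t
      = ∫ t in Ioi (0:ℝ), ∫ s in Ioc (1:ℝ) c, Real.exp (-(s*t)) := by
        refine setIntegral_congr_fun measurableSet_Ioi (fun t ht => ?_)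
        rw [← intervalIntegral.integral_of_le hc, aux_ptwise ht]
    _ = ∫ s in Ioc (1:ℝ) c, ∫ t in Ioi (0:ℝ), Real.exp (-(s*t)) :=
        integral_integral_swap key
    _ = ∫ s in Ioc (1:ℝ) c, 1/s := by
        refine setIntegral_congr_fun measurableSet_Ioc (fun s hs => ?_)
        exact aux_exp_int (lt_of_lt_of_le one_pos hs.1.le)
    _ = Real.log c := by
        rw [← intervalIntegral.integral_of_le hc, integral_one_div, div_one]
        rw [uIcc_of_le hc]
        intro h
        exact absurd h.1 (by norm_num)

lemma aux_integrable {f : ℝ → ℝ} (C : ℝ) (hc : ContinuousOn f (Ioi 0))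
    (hb : ∀ t ∈ Ioi (0:ℝ), |f t| ≤ C * Real.exp (-t)) : IntegrableOn f (Ioi 0) := by
  have h1 : IntegrableOn (fun t : ℝ => C * Real.exp (-t)) (Ioi 0) := by
    have : IntegrableOn (fun t : ℝ => Real.exp (-t)) (Ioi 0) := by
      simpa using exp_neg_integrableOn_Ioi 0 one_pos
    exact this.const_mul C
  refine Integrable.mono' h1 (hc.aestronglyMeasurable measurableSet_Ioi) ?_
  filter_upwards [ae_restrict_mem measurableSet_Ioi] with t ht
  exact hb t ht

lemma exp_lt_one' {t : ℝ} (ht : 0 < t) : Real.exp (-t) < 1 :=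
  Real.exp_lt_one_iff.2 (neg_neg_iff_pos.2 ht)

lemma one_sub_exp_le {t : ℝ} (ht : 0 ≤ t) : 1 - Real.exp (-t) ≤ t := by
  nlinarith [Real.add_one_le_exp (-t)]

lemma int_fk {c : ℝ} (hc : 1 ≤ c) :
    IntegrableOn (fun t => (Real.exp (-t) - Real.exp (-(c*t)))/t) (Ioi 0) := by
  refine aux_integrable c ?_ ?_
  · exact ContinuousOn.div
      (Continuous.continuousOn (by continuity)) continuousOn_id (fun t ht => ne_of_gt ht)
  · intro t ht
    have ht' : (0:ℝ) < t := ht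
    have h1 : Real.exp (-(c*t)) ≤ Real.exp (-t) := by
      apply Real.exp_le_exp.2; nlinarith
    have h2 : Real.exp (-(c*t)) = Real.exp (-t) * Real.exp (-((c-1)*t)) := by
      rw [← Real.exp_add]; ring_nf
    have h3 : 1 - Real.exp (-((c-1)*t)) ≤ (c-1)*t := one_sub_exp_le (by nlinarith)
    rw [abs_of_nonneg (div_nonneg (by linarith) ht'.le)]
    rw [div_le_iff₀ ht']
    have := Real.exp_pos (-t)
    nlinarith [Real.exp_pos (-((c-1)*t))]

lemma int_gn {n : ℕ} (hn : 1 ≤ n) :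
    IntegrableOn (fun t => Real.exp (-t) * (1 - Real.exp (-t))^n / t) (Ioi 0) := by
  refine aux_integrable 1 ?_ ?_
  · exact ContinuousOn.div
      (Continuous.continuousOn (by continuity)) continuousOn_id (fun t ht => ne_of_gt ht)
  · intro t ht
    have ht' : (0:ℝ) < t := ht
    have hx1 : Real.exp (-t) < 1 := exp_lt_one' ht'
    have hx0 : 0 < Real.exp (-t) := Real.exp_pos _
    have h1 : (1 - Real.exp (-t))^n ≤ 1 - Real.exp (-t) :=
      pow_le_of_le_one (by linarith) (by linarith) (by omega)
    have h2 : 1 - Real.exp (-t) ≤ t := one_sub_exp_le ht'.le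
    have hnn : 0 ≤ Real.exp (-t) * (1 - Real.exp (-t))^n / t := by
      apply div_nonneg _ ht'.le
      exact mul_nonneg hx0.le (pow_nonneg (by linarith) n)
    rw [abs_of_nonneg hnn, one_mul, div_le_iff₀ ht']
    nlinarith [pow_nonneg (by linarith : (0:ℝ) ≤ 1 - Real.exp (-t)) n]

lemma alt_sum_id (n : ℕ) (hn : 1 ≤ n) {x t : ℝ} (ht : t ≠ 0) :
    ∑ k ∈ Finset.range (n+1), (-1:ℝ)^(k+1) * (n.choose k) * ((x - x^(k+1))/t)
      = x * (1-x)^n / t := by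
  have h0 : ∑ k ∈ Finset.range (n+1), (-1:ℝ)^k * (n.choose k) = 0 := by
    have h := Int.alternating_sum_range_choose_of_ne (n := n) (by omega)
    calc ∑ k ∈ Finset.range (n+1), (-1:ℝ)^k * (n.choose k)
        = ((∑ k ∈ Finset.range (n+1), (-1:ℤ)^k * (n.choose k) : ℤ) : ℝ) := by push_cast; rfl
      _ = 0 := by rw [h]; simp
  have h1 : ∑ k ∈ Finset.range (n+1), (-1:ℝ)^k * (n.choose k) * x^k = (1-x)^n := by
    have h2 := add_pow (R := ℝ) (-x) 1 n
    simp only [one_pow, mul_one] at h2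
    rw [show (1-x : ℝ) = (-x) + 1 by ring, h2]
    refine Finset.sum_congr rfl (fun k _ => ?_)
    rw [neg_pow]
    ring
  calc ∑ k ∈ Finset.range (n+1), (-1:ℝ)^(k+1) * (n.choose k) * ((x - x^(k+1))/t)
      = ∑ k ∈ Finset.range (n+1),
          ((x/t) * (-((-1:ℝ)^k * (n.choose k))) + (x/t) * ((-1:ℝ)^k * (n.choose k) * x^k)) := by
        refine Finset.sum_congr rfl (fun k _ => ?_)
        rw [pow_succ, pow_succ]
        ring
    _ = (x/t) * (∑ k ∈ Finset.range (n+1), -((-1:ℝ)^k * (n.choose k)))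
        + (x/t) * (∑ k ∈ Finset.range (n+1), (-1:ℝ)^k * (n.choose k) * x^k) := by
        rw [Finset.sum_add_distrib, ← Finset.mul_sum, ← Finset.mul_sum]
    _ = x * (1-x)^n / t := by
        rw [Finset.sum_neg_distrib, h0, h1]
        ring

lemma T_eq (n : ℕ) (hn : 1 ≤ n) :
    ∑ k ∈ Finset.range (n+1), (-1:ℝ)^(k+1) * (n.choose k) * Real.log (k+1)
      = ∫ t in Ioi (0:ℝ), Real.exp (-t) * (1 - Real.exp (-t))^n / t := by
  have hck : ∀ k : ℕ, (1:ℝ) ≤ (k:ℝ)+1 := fun k => by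
    have := Nat.cast_nonneg (α := ℝ) k; linarith
  calc ∑ k ∈ Finset.range (n+1), (-1:ℝ)^(k+1) * (n.choose k) * Real.log (k+1)
      = ∑ k ∈ Finset.range (n+1), ∫ t in Ioi (0:ℝ),
          (-1:ℝ)^(k+1) * (n.choose k) * ((Real.exp (-t) - Real.exp (-(((k:ℝ)+1)*t)))/t) := by
        refine Finset.sum_congr rfl (fun k _ => ?_)
        rw [← frullani (hck k), ← MeasureTheory.integral_const_mul]
    _ = ∫ t in Ioi (0:ℝ), ∑ k ∈ Finset.range (n+1),
          (-1:ℝ)^(k+1) * (n.choose k) * ((Real.exp (-t) - Real.exp (-(((k:ℝ)+1)*t)))/t) := by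
        refine (integral_finset_sum _ (fun k _ => ?_)).symm
        exact (int_fk (hck k)).const_mul _
    _ = ∫ t in Ioi (0:ℝ), Real.exp (-t) * (1 - Real.exp (-t))^n / t := by
        refine setIntegral_congr_fun measurableSet_Ioi (fun t ht => ?_)
        have ht' : (0:ℝ) < t := ht
        have hxe : ∀ k : ℕ, Real.exp (-(((k:ℝ)+1)*t)) = Real.exp (-t)^(k+1) := by
          intro k
          rw [← Real.exp_nat_mul]
          congr 1
          push_cast
          ring
        rw [← alt_sum_id n hn (x := Real.exp (-t)) ht'.ne']
        refine Finset.sum_congr rfl (fun k _ => ?_)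
        rw [hxe k]

lemma geom_id (N : ℕ) {x t : ℝ} (hx : 1 + x ≠ 0) (ht : t ≠ 0) :
    ∑ n ∈ Finset.Icc 1 N, (1/2^n : ℝ) * (x * (1-x)^n / t)
      = x * (1-x) * (1 - ((1-x)/2)^N) / ((1+x)*t) := by
  induction N with
  | zero => simp
  | succ N ih =>
    rw [Finset.sum_Icc_succ_top (by omega : 1 ≤ N+1), ih]
    simp only [div_pow]
    field_simp
    ring

noncomputable def Ival : ℝ :=
  ∫ t in Ioi (0:ℝ), Real.exp (-t) * (1 - Real.exp (-t)) / ((1 + Real.exp (-t)) * t)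

lemma int_g : IntegrableOn
    (fun t => Real.exp (-t) * (1 - Real.exp (-t)) / ((1 + Real.exp (-t)) * t)) (Ioi 0) := by
  refine aux_integrable 1 ?_ ?_
  · refine ContinuousOn.div (Continuous.continuousOn (by continuity)) ?_ ?_
    · exact Continuous.continuousOn (by continuity)
    · intro t ht
      have ht' : (0:ℝ) < t := ht
      have := Real.exp_pos (-t)
      positivity
  · intro t ht
    have ht' : (0:ℝ) < t := ht
    have hx0 : 0 < Real.exp (-t) := Real.exp_pos _
    have hx1 : Real.exp (-t) < 1 := Real.exp_lt_one_iff.2 (by linarith)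
    have h2 : 1 - Real.exp (-t) ≤ t := one_sub_exp_le ht'.le
    have hnn : 0 ≤ Real.exp (-t) * (1 - Real.exp (-t)) / ((1 + Real.exp (-t)) * t) := by
      apply div_nonneg (mul_nonneg hx0.le (by linarith)) (by nlinarith)
    rw [abs_of_nonneg hnn, one_mul, div_le_iff₀ (by nlinarith : (0:ℝ) < (1 + Real.exp (-t)) * t)]
    nlinarith [mul_le_mul_of_nonneg_left h2 hx0.le,
      mul_nonneg (mul_nonneg hx0.le hx0.le) ht'.le]

lemma S_dist (N : ℕ) :
    |(∑ n ∈ Finset.Icc 1 N, (1/2^n : ℝ) *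
        ∫ t in Ioi (0:ℝ), Real.exp (-t) * (1 - Real.exp (-t))^n / t) - Ival| ≤ (1/2)^N := by
  set g : ℝ → ℝ := fun t => Real.exp (-t) * (1 - Real.exp (-t)) / ((1 + Real.exp (-t)) * t)
  set F : ℝ → ℝ := fun t =>
    ∑ n ∈ Finset.Icc 1 N, (1/2^n : ℝ) * (Real.exp (-t) * (1 - Real.exp (-t))^n / t)
  have hFint : IntegrableOn F (Ioi 0) := by
    refine integrable_finset_sum _ (fun n hn => ?_)
    exact (int_gn (Finset.mem_Icc.1 hn).1).const_mul _
  have hsum : (∑ n ∈ Finset.Icc 1 N, (1/2^n : ℝ) *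
      ∫ t in Ioi (0:ℝ), Real.exp (-t) * (1 - Real.exp (-t))^n / t) = ∫ t in Ioi (0:ℝ), F t := by
    rw [integral_finset_sum _ (fun n hn => (int_gn (Finset.mem_Icc.1 hn).1).const_mul _)]
    exact Finset.sum_congr rfl (fun n _ => (MeasureTheory.integral_const_mul _ _).symm)
  rw [hsum, show Ival = ∫ t in Ioi (0:ℝ), g t from rfl, ← integral_sub hFint int_g]
  have hb : ∀ t ∈ Ioi (0:ℝ), ‖F t - g t‖ ≤ (1/2)^N * Real.exp (-t) := by
    intro t ht
    have ht' : (0:ℝ) < t := ht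
    have hx0 : 0 < Real.exp (-t) := Real.exp_pos _
    have hx1 : Real.exp (-t) < 1 := Real.exp_lt_one_iff.2 (by linarith)
    set x := Real.exp (-t) with hxdef
    have hFt : F t = x * (1-x) * (1 - ((1-x)/2)^N) / ((1+x)*t) :=
      geom_id N (by nlinarith) ht'.ne'
    have hgt : g t = x * (1-x) / ((1+x)*t) := rfl
    have h2 : 1 - x ≤ t := one_sub_exp_le ht'.le
    have hv0 : (0:ℝ) ≤ (1-x)/2 := by linarith
    have hv1 : (1-x)/2 ≤ 1/2 := by linarith
    have hvpow : ((1-x)/2)^N ≤ (1/2)^N := pow_le_pow_left₀ hv0 hv1 N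
    have hvpow0 : 0 ≤ ((1-x)/2)^N := pow_nonneg hv0 N
    have hdiff : F t - g t = -(x * (1-x) * ((1-x)/2)^N / ((1+x)*t)) := by
      rw [hFt, hgt]; field_simp; ring
    rw [hdiff, norm_neg, Real.norm_eq_abs,
      abs_of_nonneg (div_nonneg (mul_nonneg (mul_nonneg hx0.le (by linarith)) hvpow0)
        (by nlinarith) : (0:ℝ) ≤ x * (1-x) * ((1-x)/2)^N / ((1+x)*t))]
    rw [div_le_iff₀ (by nlinarith : (0:ℝ) < (1+x)*t)]
    have key : x * (1-x) * ((1-x)/2)^N ≤ (1/2)^N * x * t := by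
      calc x * (1-x) * ((1-x)/2)^N ≤ x * t * (1/2)^N := by
            apply mul_le_mul (by nlinarith) hvpow hvpow0 (by positivity)
        _ = (1/2)^N * x * t := by ring
    nlinarith [key, mul_nonneg (pow_nonneg (by norm_num : (0:ℝ) ≤ 1/2) N)
      (mul_nonneg (mul_nonneg hx0.le hx0.le) ht'.le)]
  have hIb : Integrable (fun t => (1/2:ℝ)^N * Real.exp (-t)) (volume.restrict (Ioi 0)) := by
    have : IntegrableOn (fun t : ℝ => Real.exp (-t)) (Ioi 0) := by
      simpa using exp_neg_integrableOn_Ioi 0 one_pos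
    exact this.const_mul _
  have := norm_integral_le_of_norm_le hIb
    (by filter_upwards [ae_restrict_mem measurableSet_Ioi] with t ht using hb t ht)
  rw [Real.norm_eq_abs] at this
  refine this.trans ?_
  rw [MeasureTheory.integral_const_mul, integral_exp_neg_Ioi_zero, mul_one]

lemma tendsto_S : Tendsto (fun N => ∑ n ∈ Finset.Icc 1 N, (1/2^n : ℝ) *
    ∫ t in Ioi (0:ℝ), Real.exp (-t) * (1 - Real.exp (-t))^n / t) atTop (nhds Ival) := by
  rw [← tendsto_sub_nhds_zero_iff]
  refine squeeze_zero_norm (a := fun N => (1/2:ℝ)^N) (fun N => ?_) ?_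
  · simpa using S_dist N
  · exact tendsto_pow_atTop_nhds_zero_of_lt_one (by norm_num) (by norm_num)

lemma geom_id2 (M : ℕ) {x t : ℝ} (hx : 1 + x ≠ 0) (ht : t ≠ 0) :
    ∑ j ∈ Finset.range M, (-1:ℝ)^j * ((x^(j+1) - x^(j+2))/t)
      = x * (1-x) * (1 - (-x)^M) / ((1+x)*t) := by
  induction M with
  | zero => simp
  | succ M ih =>
    rw [Finset.sum_range_succ, ih]
    field_simp
    ring

lemma int_hj (j : ℕ) :
    IntegrableOn (fun t => (Real.exp (-t)^(j+1) - Real.exp (-t)^(j+2))/t) (Ioi 0) := by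
  refine aux_integrable 1 ?_ ?_
  · exact ContinuousOn.div (Continuous.continuousOn (by continuity)) continuousOn_id
      (fun t ht => ne_of_gt ht)
  · intro t ht
    have ht' : (0:ℝ) < t := ht
    have hx0 : 0 < Real.exp (-t) := Real.exp_pos _
    have hx1 : Real.exp (-t) < 1 := Real.exp_lt_one_iff.2 (by linarith)
    set x := Real.exp (-t)
    have h2 : 1 - x ≤ t := one_sub_exp_le ht'.le
    have hp : x^(j+1) ≤ x := pow_le_of_le_one hx0.le hx1.le (by omega)
    have hd : x^(j+1) - x^(j+2) = x^(j+1) * (1-x) := by ring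
    have hnn : (0:ℝ) ≤ (x^(j+1) - x^(j+2))/t := by
      rw [hd]
      exact div_nonneg (mul_nonneg (pow_nonneg hx0.le _) (by linarith)) ht'.le
    rw [abs_of_nonneg hnn, one_mul, div_le_iff₀ ht', hd]
    nlinarith [pow_nonneg hx0.le (j+1), pow_pos hx0 (j+1)]

lemma Q_eq (j : ℕ) : ∫ t in Ioi (0:ℝ), (Real.exp (-t)^(j+1) - Real.exp (-t)^(j+2))/t
    = Real.log ((j:ℝ)+2) - Real.log ((j:ℝ)+1) := by
  have hc1 : (1:ℝ) ≤ (j:ℝ)+1 := by have := Nat.cast_nonneg (α := ℝ) j; linarith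
  have hc2 : (1:ℝ) ≤ (j:ℝ)+2 := by linarith
  rw [← frullani hc2, ← frullani hc1, ← integral_sub (int_fk hc2) (int_fk hc1)]
  refine setIntegral_congr_fun measurableSet_Ioi (fun t ht => ?_)
  have he : ∀ m : ℕ, Real.exp (-(((m:ℝ))*t)) = Real.exp (-t)^m := by
    intro m
    rw [← Real.exp_nat_mul]
    congr 1
    ring
  have h1 : Real.exp (-(((j:ℝ)+1)*t)) = Real.exp (-t)^(j+1) := by
    rw [show ((j:ℝ)+1) = ((j+1 : ℕ) : ℝ) by push_cast; ring, he]
  have h2 : Real.exp (-(((j:ℝ)+2)*t)) = Real.exp (-t)^(j+2) := by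
    rw [show ((j:ℝ)+2) = ((j+2 : ℕ) : ℝ) by push_cast; ring, he]
  simp only [h1, h2]
  ring

lemma Q_dist (M : ℕ) :
    |(∑ j ∈ Finset.range M, (-1:ℝ)^j * (Real.log ((j:ℝ)+2) - Real.log ((j:ℝ)+1))) - Ival|
      ≤ 1/((M:ℝ)+1) := by
  set g : ℝ → ℝ := fun t => Real.exp (-t) * (1 - Real.exp (-t)) / ((1 + Real.exp (-t)) * t)
  set F : ℝ → ℝ := fun t =>
    ∑ j ∈ Finset.range M, (-1:ℝ)^j * ((Real.exp (-t)^(j+1) - Real.exp (-t)^(j+2))/t)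
  have hFint : IntegrableOn F (Ioi 0) :=
    integrable_finset_sum _ (fun j _ => (int_hj j).const_mul _)
  have hsum : (∑ j ∈ Finset.range M, (-1:ℝ)^j * (Real.log ((j:ℝ)+2) - Real.log ((j:ℝ)+1)))
      = ∫ t in Ioi (0:ℝ), F t := by
    rw [integral_finset_sum _ (fun j _ => (int_hj j).const_mul _)]
    refine Finset.sum_congr rfl (fun j _ => ?_)
    rw [MeasureTheory.integral_const_mul, Q_eq]
  rw [hsum, show Ival = ∫ t in Ioi (0:ℝ), g t from rfl, ← integral_sub hFint int_g]
  have hb : ∀ t ∈ Ioi (0:ℝ), ‖F t - g t‖ ≤ Real.exp (-(((M:ℝ)+1)*t)) := by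
    intro t ht
    have ht' : (0:ℝ) < t := ht
    have hx0 : 0 < Real.exp (-t) := Real.exp_pos _
    have hx1 : Real.exp (-t) < 1 := Real.exp_lt_one_iff.2 (by linarith)
    set x := Real.exp (-t) with hxdef
    have hFt : F t = x * (1-x) * (1 - (-x)^M) / ((1+x)*t) :=
      geom_id2 M (by nlinarith) ht'.ne'
    have h2 : 1 - x ≤ t := one_sub_exp_le ht'.le
    have hdiff : F t - g t = -(x * (1-x) * (-x)^M / ((1+x)*t)) := by
      rw [hFt, show g t = x * (1-x) / ((1+x)*t) from rfl]
      field_simp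
      ring
    have hexp : Real.exp (-(((M:ℝ)+1)*t)) = x^(M+1) := by
      rw [hxdef, ← Real.exp_nat_mul]
      congr 1
      push_cast
      ring
    rw [hdiff, norm_neg, Real.norm_eq_abs, hexp, abs_div, abs_mul, abs_mul, abs_pow, abs_neg,
      abs_of_pos hx0, abs_of_nonneg (by linarith : (0:ℝ) ≤ 1-x),
      abs_of_pos (by nlinarith : (0:ℝ) < (1+x)*t)]
    rw [div_le_iff₀ (by nlinarith : (0:ℝ) < (1+x)*t)]
    have hxM : x^M * x = x^(M+1) := (pow_succ x M).symm
    have h3 : x * (1-x) * x^M ≤ x^(M+1) * t := by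
      calc x * (1-x) * x^M ≤ x * t * x^M := by
            nlinarith [pow_nonneg hx0.le M, mul_le_mul_of_nonneg_left h2 hx0.le]
        _ = x^(M+1) * t := by rw [← hxM]; ring
    nlinarith [pow_nonneg hx0.le (M+1), pow_pos hx0 (M+1), mul_nonneg
      (mul_nonneg (pow_nonneg hx0.le (M+1)) hx0.le) ht'.le]
  have hIb : Integrable (fun t => Real.exp (-(((M:ℝ)+1)*t))) (volume.restrict (Ioi 0)) := by
    have := exp_neg_integrableOn_Ioi 0 (by positivity : (0:ℝ) < (M:ℝ)+1)
    exact (by simpa only [neg_mul] using this : IntegrableOn (fun t : ℝ => Real.exp (-(((M:ℝ)+1)*t))) (Ioi 0))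
  have hkey := norm_integral_le_of_norm_le hIb
    (by filter_upwards [ae_restrict_mem measurableSet_Ioi] with t ht using hb t ht)
  rw [Real.norm_eq_abs] at hkey
  refine hkey.trans ?_
  rw [aux_exp_int (by positivity : (0:ℝ) < (M:ℝ)+1)]

lemma tendsto_Q : Tendsto (fun M => ∑ j ∈ Finset.range M,
    (-1:ℝ)^j * (Real.log ((j:ℝ)+2) - Real.log ((j:ℝ)+1))) atTop (nhds Ival) := by
  rw [← tendsto_sub_nhds_zero_iff]
  refine squeeze_zero_norm (a := fun M : ℕ => 1/((M:ℝ)+1)) (fun (M : ℕ) => by simpa using Q_dist M) ?_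
  exact tendsto_one_div_add_atTop_nhds_zero_nat

lemma Q_even (m : ℕ) :
    ∑ j ∈ Finset.range (2*m), (-1:ℝ)^j * (Real.log ((j:ℝ)+2) - Real.log ((j:ℝ)+1))
      = Real.log (∏ i ∈ Finset.range m, ((2:ℝ)*i+2)/(2*i+1) * ((2*i+2)/(2*i+3))) := by
  induction m with
  | zero => simp
  | succ m ih =>
    have hW : (0:ℝ) < ∏ i ∈ Finset.range m, ((2:ℝ)*i+2)/(2*i+1) * ((2*i+2)/(2*i+3)) := by
      refine Finset.prod_pos (fun i _ => ?_)
      have : (0:ℝ) ≤ (i:ℝ) := Nat.cast_nonneg i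
      positivity
    have h1 : (0:ℝ) < 2*(m:ℝ)+1 := by positivity
    have h2 : (0:ℝ) < 2*(m:ℝ)+2 := by positivity
    have h3 : (0:ℝ) < 2*(m:ℝ)+3 := by positivity
    rw [show 2*(m+1) = (2*m+1)+1 by ring, Finset.sum_range_succ, Finset.sum_range_succ, ih,
      Finset.prod_range_succ, Real.log_mul (ne_of_gt hW), Real.log_mul, Real.log_div, Real.log_div]
    · push_cast
      have he : (-1:ℝ)^(2*m) = 1 := by
        rw [pow_mul]; norm_num
      have ho : (-1:ℝ)^(2*m+1) = -1 := by
        rw [pow_succ, he]; norm_num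
      rw [he, ho, show (2*(m:ℝ)+1+2) = 2*(m:ℝ)+3 by ring, show (2*(m:ℝ)+1+1) = 2*(m:ℝ)+2 by ring]
      linarith
    all_goals positivity

/-- ∑_{n=1}^∞ (1/2^n) ∑_{k=0}^n (-1)^{k+1} C(n,k) ln(k+1) = ln(π/2). -/
theorem stmt_0 :
    Tendsto (fun N : ℕ => ∑ n ∈ Finset.Icc 1 N,
        (1 / 2 ^ n : ℝ) * ∑ k ∈ Finset.range (n + 1),
          (-1 : ℝ) ^ (k + 1) * (n.choose k : ℝ) * Real.log (k + 1))
      atTop (nhds (Real.log (Real.pi / 2))) := by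
  have hIval : Ival = Real.log (Real.pi / 2) := by
    have h2m : Tendsto (fun m : ℕ => 2*m) atTop atTop :=
      tendsto_atTop_mono (fun n => by simp only [id_eq]; omega) tendsto_id
    have h1 : Tendsto (fun m : ℕ => ∑ j ∈ Finset.range (2*m),
        (-1:ℝ)^j * (Real.log ((j:ℝ)+2) - Real.log ((j:ℝ)+1))) atTop (nhds Ival) :=
      tendsto_Q.comp h2m
    have h2 : Tendsto (fun m : ℕ => Real.log (∏ i ∈ Finset.range m,
        ((2:ℝ)*i+2)/(2*i+1) * ((2*i+2)/(2*i+3)))) atTop (nhds (Real.log (π/2))) := by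
      have hpi : (0:ℝ) < π/2 := by positivity
      exact ((Real.continuousAt_log (ne_of_gt hpi)).tendsto).comp Real.tendsto_prod_pi_div_two
    simp only [Q_even] at h1
    exact tendsto_nhds_unique h1 h2
  have heq : (fun N : ℕ => ∑ n ∈ Finset.Icc 1 N,
        (1 / 2 ^ n : ℝ) * ∑ k ∈ Finset.range (n + 1),
          (-1 : ℝ) ^ (k + 1) * (n.choose k : ℝ) * Real.log (k + 1))
      = fun N : ℕ => ∑ n ∈ Finset.Icc 1 N, (1/2^n : ℝ) *
          ∫ t in Ioi (0:ℝ), Real.exp (-t) * (1 - Real.exp (-t))^n / t := by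
    funext N
    exact Finset.sum_congr rfl (fun n hn => by rw [T_eq n (Finset.mem_Icc.1 hn).1])
  rw [heq, ← hIval]
  exact tendsto_S
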